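/- The equation (1/ϱ - ϱ)/2 = e^{j/2} · ln(1/ϱ) has a solution ϱ ∈ (0,1) whenever j > 0. -/

import Mathlib

theorem smp_continuous_grr_solution_exists (j : ℝ) (hj : 0 < j) :
    ∃ ϱ ∈ Set.Ioo (0:ℝ) 1,
      (1 / ϱ - ϱ) / 2 = Real.exp (j / 2) * Real.log (1 / ϱ) := by
  set c : ℝ := Real.exp (j / 2) with hc_def
  have hcj : j / 2 + 1 < c := by
    have := Real.add_one_lt_exp (show j / 2 ≠ 0 by positivity)
    linarith
  have hc : 1 < c := by linarith
  have hc0 : (0:ℝ) < c := by linarith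
  set s : ℝ := j / 4 with hs_def
  set t : ℝ := 54 * c with ht_def
  have hs : 0 < s := by positivity
  have hst : s < t := by nlinarith
  set a : ℝ := Real.exp (-t) with ha_def
  set b : ℝ := Real.exp (-s) with hb_def
  have ha : 0 < a := Real.exp_pos _
  have hab : a < b := Real.exp_lt_exp.2 (by linarith)
  have hb1 : b < 1 := by
    rw [hb_def]
    calc Real.exp (-s) < Real.exp 0 := Real.exp_lt_exp.2 (by linarith)
    _ = 1 := Real.exp_zero
  set F : ℝ → ℝ := fun x => (1 / x - x) / 2 - c * Real.log (1 / x) with hF_def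
  -- F b < 0
  have hFb : F b < 0 := by
    have h1 : (1:ℝ) / b = Real.exp s := by
      rw [hb_def, one_div, ← Real.exp_neg, neg_neg]
    have h3 : -2 * s + 1 < Real.exp (-2 * s) :=
      Real.add_one_lt_exp (by intro h; nlinarith)
    have h4 : Real.exp (-s) = Real.exp s * Real.exp (-2 * s) := by
      rw [← Real.exp_add]; ring_nf
    have h5 : Real.exp s < c := by
      rw [hc_def]; exact Real.exp_lt_exp.2 (by rw [hs_def]; linarith)
    have hes : 0 < Real.exp s := Real.exp_pos _
    simp only [hF_def, h1, Real.log_exp]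
    simp only [hb_def]
    nlinarith [mul_pos hes hs, mul_lt_mul_of_pos_right h5 hs,
      mul_lt_mul_of_pos_left h3 hes]
  -- F a > 0
  have hFa : 0 < F a := by
    have h1 : (1:ℝ) / a = Real.exp t := by
      rw [ha_def, one_div, ← Real.exp_neg, neg_neg]
    have h3 : Real.exp (t/3) ^ 3 = Real.exp t := by
      rw [← Real.exp_nat_mul]; norm_num; ring_nf
    have h4 : t/3 + 1 ≤ Real.exp (t/3) := Real.add_one_le_exp _
    have h5 : Real.exp (-t) < 1 := by
      calc Real.exp (-t) < Real.exp 0 := Real.exp_lt_exp.2 (by nlinarith)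
      _ = 1 := Real.exp_zero
    have ht3 : 0 < t/3 := by nlinarith
    have h6 : (t/3)^3 ≤ Real.exp t := by
      rw [← h3]
      exact pow_le_pow_left₀ ht3.le (by linarith) 3
    have h7 : 0 ≤ c^2 * (c - 1) := by nlinarith
    have h8 : 1 < c^2 := by nlinarith
    have h6' : 5832 * c^3 ≤ Real.exp t := by
      have heq : (t/3)^3 = 5832 * c^3 := by rw [ht_def]; ring
      linarith [heq ▸ h6]
    simp only [hF_def, h1, Real.log_exp]
    simp only [ha_def]
    nlinarith [h6', h5, h7, h8]
  -- continuity
  have hcont : ContinuousOn F (Set.Icc a b) := by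
    have hne : ∀ x ∈ Set.Icc a b, x ≠ 0 := fun x hx => ne_of_gt (lt_of_lt_of_le ha hx.1)
    apply ContinuousOn.sub
    · apply ContinuousOn.div_const
      exact (continuousOn_const.div continuousOn_id hne).sub continuousOn_id
    · apply continuousOn_const.mul
      apply Real.continuousOn_log.comp (continuousOn_const.div continuousOn_id hne)
      intro x hx
      simp only [Set.mem_compl_iff, Set.mem_singleton_iff]
      exact one_div_ne_zero (hne x hx)
  have key := intermediate_value_Icc' (le_of_lt hab) hcont
  have h0 : (0:ℝ) ∈ Set.Icc (F b) (F a) := ⟨le_of_lt hFb, le_of_lt hFa⟩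
  obtain ⟨x, hx, hFx⟩ := key h0
  refine ⟨x, ⟨lt_of_lt_of_le ha hx.1, lt_of_le_of_lt hx.2 hb1⟩, ?_⟩
  have : (1 / x - x) / 2 - c * Real.log (1 / x) = 0 := hFx
  linarith
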